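/- For real p with 1 < p < n (n > 1 an integer): ν(p',n) = π_{p,n} / (2(cos(π/n) - sin(π/n)·cot(π/p))), where p' = p/(p-1). -/

import Mathlib

open Real MeasureTheory Set

lemma betaReal {u v : ℝ} (hu : 0 < u) (hv : 0 < v) :
    ∫ x in (0:ℝ)..1, x ^ (u - 1) * (1 - x) ^ (v - 1)
      = Real.Gamma u * Real.Gamma v / Real.Gamma (u + v) := by
  have h := Complex.Gamma_mul_Gamma_eq_betaIntegral (s := (u:ℂ)) (t := (v:ℂ))
      (by simpa using hu) (by simpa using hv)
  have hb : Complex.betaIntegral u v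
      = ((∫ x in (0:ℝ)..1, x ^ (u - 1) * (1 - x) ^ (v - 1) : ℝ) : ℂ) := by
    rw [← intervalIntegral.integral_ofReal]
    unfold Complex.betaIntegral
    refine intervalIntegral.integral_congr fun x hx => ?_
    rw [Set.uIcc_of_le (by norm_num : (0:ℝ) ≤ 1)] at hx
    rw [Complex.ofReal_mul, Complex.ofReal_cpow hx.1, Complex.ofReal_cpow (by linarith [hx.2])]
    push_cast
    ring
  rw [hb, ← Complex.ofReal_add, Complex.Gamma_ofReal, Complex.Gamma_ofReal,
    Complex.Gamma_ofReal] at h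
  have h2 : Real.Gamma u * Real.Gamma v
      = Real.Gamma (u + v) * ∫ x in (0:ℝ)..1, x ^ (u - 1) * (1 - x) ^ (v - 1) := by
    exact_mod_cast h
  have h3 : Real.Gamma (u + v) ≠ 0 := (Real.Gamma_pos_of_pos (by linarith)).ne'
  field_simp [h3]
  linarith [h2]

lemma lemB (n : ℕ) (hn : 0 < n) (a c : ℝ) (ha : a = 1/(n:ℝ)) :
    ∫ x in Ioi (0:ℝ), x ^ (a - 1) * (1 + x) ^ (-c)
      = (n:ℝ) * ∫ t in Ioi (0:ℝ), (1 + t ^ n) ^ (-c) := by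
  have hn0 : (0:ℝ) < n := by exact_mod_cast hn
  rw [← integral_comp_rpow_Ioi_of_pos
    (g := fun x => x ^ (a - 1) * (1 + x) ^ (-c)) hn0, ← integral_const_mul]
  refine setIntegral_congr_fun measurableSet_Ioi fun t ht => ?_
  have ht0 : (0:ℝ) < t := ht
  have h1 : t ^ ((n:ℝ)) = t ^ n := rpow_natCast t n
  have h2 : t ^ ((n:ℝ) - 1) * (t ^ ((n:ℝ))) ^ (a - 1) = 1 := by
    rw [← Real.rpow_mul ht0.le, ← Real.rpow_add ht0]
    rw [show ((n:ℝ) - 1 + (n:ℝ) * (a - 1)) = 0 by rw [ha]; field_simp; ring]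
    exact rpow_zero t
  simp only [smul_eq_mul]
  calc (n:ℝ) * t ^ ((n:ℝ) - 1) * ((t ^ ((n:ℝ))) ^ (a - 1) * (1 + t ^ ((n:ℝ))) ^ (-c))
      = (n:ℝ) * (t ^ ((n:ℝ) - 1) * (t ^ ((n:ℝ))) ^ (a - 1)) * (1 + t ^ ((n:ℝ))) ^ (-c) := by ring
    _ = (n:ℝ) * (1 + t ^ n) ^ (-c) := by rw [h2, h1]; ring

lemma lemJ (n : ℕ) (hn : 0 < n) (a c : ℝ) (ha : a = 1/(n:ℝ)) :
    ∫ x in Ioo (0:ℝ) 1, x ^ (a - 1) * (1 - x) ^ (-c)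
      = (n:ℝ) * ∫ t in Ioo (0:ℝ) 1, (1 - t ^ n) ^ (-c) := by
  have hn0 : (0:ℝ) < n := by exact_mod_cast hn
  have himg : (fun t : ℝ => t ^ ((n:ℝ))) '' Ioo 0 1 = Ioo 0 1 := by
    ext y
    constructor
    · rintro ⟨t, ht, rfl⟩
      exact ⟨rpow_pos_of_pos ht.1 _, rpow_lt_one ht.1.le ht.2 hn0⟩
    · intro hy
      refine ⟨y ^ (1/(n:ℝ)), ⟨rpow_pos_of_pos hy.1 _, rpow_lt_one hy.1.le hy.2 (by positivity)⟩, ?_⟩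
      show (y ^ (1/(n:ℝ))) ^ ((n:ℝ)) = y
      rw [← Real.rpow_mul hy.1.le, one_div_mul_cancel hn0.ne', rpow_one]
  have hderiv : ∀ t ∈ Ioo (0:ℝ) 1,
      HasDerivWithinAt (fun t : ℝ => t ^ ((n:ℝ))) ((n:ℝ) * t ^ ((n:ℝ) - 1)) (Ioo 0 1) t :=
    fun t ht => (Real.hasDerivAt_rpow_const (Or.inl ht.1.ne')).hasDerivWithinAt
  have hinj : InjOn (fun t : ℝ => t ^ ((n:ℝ))) (Ioo 0 1) :=
    (Real.rpow_left_injOn hn0.ne').mono (fun x hx => hx.1.le)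
  have key := integral_image_eq_integral_abs_deriv_smul measurableSet_Ioo hderiv hinj
    (fun x => x ^ (a - 1) * (1 - x) ^ (-c))
  rw [himg] at key
  rw [key, ← integral_const_mul]
  refine setIntegral_congr_fun measurableSet_Ioo fun t ht => ?_
  have ht0 : (0:ℝ) < t := ht.1
  have h1 : t ^ ((n:ℝ)) = t ^ n := rpow_natCast t n
  have h2 : t ^ ((n:ℝ) - 1) * (t ^ ((n:ℝ))) ^ (a - 1) = 1 := by
    rw [← Real.rpow_mul ht0.le, ← Real.rpow_add ht0]
    rw [show ((n:ℝ) - 1 + (n:ℝ) * (a - 1)) = 0 by rw [ha]; field_simp; ring]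
    exact rpow_zero t
  rw [smul_eq_mul, abs_of_pos (by positivity)]
  calc (n:ℝ) * t ^ ((n:ℝ) - 1) * ((t ^ ((n:ℝ))) ^ (a - 1) * (1 - t ^ ((n:ℝ))) ^ (-c))
      = (n:ℝ) * (t ^ ((n:ℝ) - 1) * (t ^ ((n:ℝ))) ^ (a - 1)) * (1 - t ^ ((n:ℝ))) ^ (-c) := by ring
    _ = (n:ℝ) * (1 - t ^ n) ^ (-c) := by rw [h2, h1]; ring

lemma lemC (a c : ℝ) :
    ∫ x in Ioo (0:ℝ) 1, x ^ (a - 1) * (1 - x) ^ (c - a - 1)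
      = ∫ u in Ioi (0:ℝ), u ^ (a - 1) * (1 + u) ^ (-c) := by
  have himg : (fun u : ℝ => u / (1 + u)) '' Ioi 0 = Ioo 0 1 := by
    ext y
    constructor
    · rintro ⟨u, hu, rfl⟩
      have hu0 : (0:ℝ) < u := hu
      refine ⟨by positivity, ?_⟩
      rw [div_lt_one (by linarith)]; linarith
    · intro hy
      have h1 : (0:ℝ) < 1 - y := by linarith [hy.2]
      have h0 : (0:ℝ) < y := hy.1
      refine ⟨y / (1 - y), mem_Ioi.mpr (by positivity), ?_⟩
      show y / (1 - y) / (1 + y / (1 - y)) = y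
      field_simp
      ring
  have hderiv : ∀ u ∈ Ioi (0:ℝ),
      HasDerivWithinAt (fun u : ℝ => u / (1 + u)) (1 / (1 + u) ^ 2) (Ioi (0:ℝ)) u := by
    intro u hu
    have hu0 : (0:ℝ) < u := hu
    have hne : (1 + u) ≠ 0 := by positivity
    have h := (hasDerivAt_id u).div ((hasDerivAt_id u).const_add 1) hne
    simp only [id_eq] at h
    have h2 : (1 * (1 + u) - u * 1) / (1 + u) ^ 2 = 1 / (1 + u) ^ 2 := by ring
    rw [h2] at h
    exact h.hasDerivWithinAt
  have hinj : InjOn (fun u : ℝ => u / (1 + u)) (Ioi (0:ℝ)) := by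
    intro x hx y hy hxy
    have hx0 : (0:ℝ) < x := hx
    have hy0 : (0:ℝ) < y := hy
    have h : x * (1 + y) = y * (1 + x) := by
      field_simp at hxy
      linarith [hxy]
    nlinarith
  have key := integral_image_eq_integral_abs_deriv_smul measurableSet_Ioi hderiv hinj
    (fun x => x ^ (a - 1) * (1 - x) ^ (c - a - 1))
  rw [himg] at key
  rw [key]
  refine setIntegral_congr_fun measurableSet_Ioi fun u hu => ?_
  have hu0 : (0:ℝ) < u := hu
  have hv : (0:ℝ) < 1 + u := by linarith
  have e1 : 1 - u / (1 + u) = 1 / (1 + u) := by field_simp; ring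
  rw [smul_eq_mul, abs_of_pos (by positivity), e1]
  have A : (u / (1 + u)) ^ (a - 1) = u ^ (a - 1) * (1 + u) ^ (-(a - 1)) := by
    rw [div_eq_mul_inv, Real.mul_rpow hu0.le (by positivity), Real.inv_rpow hv.le,
      ← Real.rpow_neg hv.le]
  have B : ((1:ℝ) / (1 + u)) ^ (c - a - 1) = (1 + u) ^ (-(c - a - 1)) := by
    rw [one_div, Real.inv_rpow hv.le, ← Real.rpow_neg hv.le]
  have Cc : (1:ℝ) / (1 + u) ^ 2 = (1 + u) ^ (-(2:ℝ)) := by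
    rw [← Real.rpow_natCast (1+u) 2, one_div, ← Real.rpow_neg hv.le]
    norm_num
  rw [A, B, Cc]
  have comb : (1 + u) ^ (-(a - 1)) * (1 + u) ^ (-(c - a - 1)) * (1 + u) ^ (-(2:ℝ))
      = (1 + u) ^ (-c) := by
    rw [← Real.rpow_add hv, ← Real.rpow_add hv,
      show -(a - 1) + -(c - a - 1) + -(2:ℝ) = -c by ring]
  linear_combination u ^ (a - 1) * comb

theorem stmt_9 (p : ℝ) (n : ℕ) (hp : 1 < p) (hn : 1 < n) (hpn : p < n) :
    (∫ t in Ioi (0:ℝ), (1 + t ^ n) ^ (-(1/p)))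
      = (2 * ∫ t in (0:ℝ)..1, (1 - t ^ n) ^ (-(1/p)))
        / (2 * (Real.cos (π / n)
            - Real.sin (π / n) * (Real.cos (π / p) / Real.sin (π / p)))) := by
  have hnpos : 0 < n := by omega
  have hn0 : (0:ℝ) < n := by exact_mod_cast hnpos
  have hn1 : (1:ℝ) < n := by exact_mod_cast hn
  set A : ℝ := 1/(n:ℝ) with hA
  set C : ℝ := 1/p with hC
  have hp0 : (0:ℝ) < p := by linarith
  have hA0 : 0 < A := by positivity
  have hA1 : A < 1 := by rw [hA, div_lt_one hn0]; linarith
  have hC0 : 0 < C := by positivity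
  have hC1 : C < 1 := by rw [hC, div_lt_one hp0]; linarith
  have hAC : A < C := by
    rw [hA, hC]
    exact one_div_lt_one_div_of_lt hp0 hpn
  have hCA0 : 0 < C - A := by linarith
  have hCA1 : C - A < 1 := by linarith
  -- convert interval integrals to Ioo
  have conv : ∀ f : ℝ → ℝ, ∫ x in (0:ℝ)..1, f x = ∫ x in Ioo (0:ℝ) 1, f x := fun f => by
    rw [intervalIntegral.integral_of_le zero_le_one, MeasureTheory.integral_Ioc_eq_integral_Ioo]
  have hbeta1 : ∫ x in (0:ℝ)..1, x ^ (A - 1) * (1 - x) ^ (C - A - 1)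
      = Real.Gamma A * Real.Gamma (C - A) / Real.Gamma C := by
    have h := betaReal hA0 hCA0
    rwa [show A + (C - A) = C by ring] at h
  have hbeta2 : ∫ x in (0:ℝ)..1, x ^ (A - 1) * (1 - x) ^ (-C)
      = Real.Gamma A * Real.Gamma (1 - C) / Real.Gamma (1 - (C - A)) := by
    have h := betaReal hA0 (by linarith : (0:ℝ) < 1 - C)
    rw [show A + (1 - C) = 1 - (C - A) by ring] at h
    rw [show (-C : ℝ) = 1 - C - 1 by ring]
    exact h
  have hIval : (∫ t in Ioi (0:ℝ), (1 + t ^ n) ^ (-C))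
      = Real.Gamma A * Real.Gamma (C - A) / Real.Gamma C / n := by
    have h1 := lemB n hnpos A C hA
    have h2 := lemC A C
    rw [eq_div_iff hn0.ne', mul_comm, ← h1, ← h2, ← conv _, hbeta1]
  have hJval : (∫ t in (0:ℝ)..1, (1 - t ^ n) ^ (-C))
      = Real.Gamma A * Real.Gamma (1 - C) / Real.Gamma (1 - (C - A)) / n := by
    have h1 := lemJ n hnpos A C hA
    rw [eq_div_iff hn0.ne', conv _, mul_comm, ← h1, ← conv _, hbeta2]
  rw [hIval, hJval]
  -- trigonometry
  have hpiA : π / (n:ℝ) = π * A := by rw [hA, mul_one_div]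
  have hpiC : π / p = π * C := by rw [hC, mul_one_div]
  rw [hpiA, hpiC]
  have sinC_pos : 0 < Real.sin (π * C) := by
    apply Real.sin_pos_of_pos_of_lt_pi
    · positivity
    · nlinarith [Real.pi_pos]
  have sinCA_pos : 0 < Real.sin (π * (C - A)) := by
    apply Real.sin_pos_of_pos_of_lt_pi
    · positivity
    · nlinarith [Real.pi_pos]
  have hden : Real.cos (π * A) - Real.sin (π * A) * (Real.cos (π * C) / Real.sin (π * C))
      = Real.sin (π * (C - A)) / Real.sin (π * C) := by
    rw [show π * (C - A) = π * C - π * A by ring, Real.sin_sub]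
    field_simp
  rw [hden]
  -- Gamma reflection
  have key1 : Real.Gamma C * Real.Gamma (1 - C) * Real.sin (π * C) = π := by
    rw [Real.Gamma_mul_Gamma_one_sub]
    field_simp
  have key2 : Real.Gamma (C - A) * Real.Gamma (1 - (C - A)) * Real.sin (π * (C - A)) = π := by
    rw [Real.Gamma_mul_Gamma_one_sub]
    field_simp
  have gC : 0 < Real.Gamma C := Real.Gamma_pos_of_pos hC0
  have gCA : 0 < Real.Gamma (C - A) := Real.Gamma_pos_of_pos hCA0
  have g1C : 0 < Real.Gamma (1 - C) := Real.Gamma_pos_of_pos (by linarith)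
  have g1CA : 0 < Real.Gamma (1 - (C - A)) := Real.Gamma_pos_of_pos (by linarith)
  have gA : 0 < Real.Gamma A := Real.Gamma_pos_of_pos hA0
  rw [div_eq_div_iff (by positivity) (by positivity)]
  field_simp
  rw [mul_comm (C - A) π, mul_comm C π, div_eq_iff sinC_pos.ne']
  linear_combination key2 - key1
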